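/- Let d ≥ 1, N ≥ 1, and let ρ₀,…,ρ_N be Borel probability measures on ℝ^d with finite second moments. For x = (x₀,…,x_N) ∈ (ℝ^d)^{N+1}, let 𝕍(x) ∈ (ℝ^d)^{N+1} denote the unique minimizer of (v₀,…,v_N) ↦ Σ_{i=0}^{N−1} c(x_i, x_{i+1}, v_i, v_{i+1}). If π̂ minimizes ∫ 𝒞(x₀,…,x_N) dπ over all π ∈ Π(ρ₀,…,ρ_N), then γ̂ := (id, 𝕍)_#π̂, the pushforward of π̂ under the map x ↦ (x, 𝕍(x)), minimizes Σ_{i=0}^{N−1} ∫ c(x_i, x_{i+1}, v_i, v_{i+1}) dγ over all γ ∈ Γ(ρ₀,…,ρ_N). -/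

import Mathlib

open MeasureTheory

noncomputable section

/-- The cost `c(x, x', v, v') = 12‖x'−x−v‖² − 12⟨x'−x−v, v'−v⟩ + 4‖v'−v‖²`. -/
def splineCost {d : ℕ} (x x' v v' : EuclideanSpace ℝ (Fin d)) : ℝ :=
  12 * ‖x' - x - v‖ ^ 2 - 12 * (inner ℝ (x' - x - v) (v' - v) : ℝ) + 4 * ‖v' - v‖ ^ 2

/-- `𝒞(x₀,…,x_N)`: the infimum of `∫₀^N ‖X''‖²` over all C² curves `X` with
`X(i) = x i` for every `i = 0, …, N`. -/
def multiCost {d : ℕ} (N : ℕ) (x : Fin (N + 1) → EuclideanSpace ℝ (Fin d)) : ℝ :=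
  sInf { y : ℝ | ∃ X : ℝ → EuclideanSpace ℝ (Fin d), ContDiff ℝ 2 X ∧
      (∀ i : Fin (N + 1), X ((i : ℕ) : ℝ) = x i) ∧
      y = ∫ t in (0:ℝ)..(N:ℝ), ‖deriv (deriv X) t‖ ^ 2 }

open intervalIntegral Set

namespace SplineAux

variable {d : ℕ}

local notation "E" => EuclideanSpace ℝ (Fin d)

local notation "⟪" x ", " y "⟫" => @inner ℝ _ _ x y

/-- truncated cubic -/
def q (s : ℝ) : ℝ := max s 0 ^ 3

def q' (s : ℝ) : ℝ := 3 * max s 0 ^ 2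

def q'' (s : ℝ) : ℝ := 6 * max s 0

lemma glue {F : Type*} [NormedAddCommGroup F] [NormedSpace ℝ F] {f g h : ℝ → F} {a : ℝ} {df : F}
    (hfg : ∀ x ≤ a, f x = g x) (hfh : ∀ x, a ≤ x → f x = h x)
    (hg : HasDerivAt g df a) (hh : HasDerivAt h df a) : HasDerivAt f df a := by
  have h1 : HasDerivWithinAt f df (Iic a) a :=
    (hg.hasDerivWithinAt).congr (fun x hx => hfg x hx) (hfg a le_rfl)
  have h2 : HasDerivWithinAt f df (Ici a) a :=
    (hh.hasDerivWithinAt).congr (fun x hx => hfh x hx) (hfh a le_rfl)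
  have := h1.union h2
  rw [Iic_union_Ici] at this
  exact this.hasDerivAt (by simp)

lemma hasDerivAt_q (s : ℝ) : HasDerivAt q (q' s) s := by
  rcases lt_trichotomy s 0 with hs | rfl | hs
  · have : q' s = 0 := by simp [q', max_eq_right hs.le]
    rw [this]
    apply HasDerivAt.congr_of_eventuallyEq (f := fun _ => (0:ℝ)) (hasDerivAt_const _ _)
    filter_upwards [eventually_lt_nhds hs] with t ht
    simp [q, max_eq_right ht.le]
  · have h0 : q' 0 = 0 := by simp [q']
    rw [h0]
    apply glue (g := fun _ => (0:ℝ)) (h := fun s => s ^ 3)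
    · intro x hx; simp [q, max_eq_right hx]
    · intro x hx; simp [q, max_eq_left hx]
    · exact hasDerivAt_const _ _
    · simpa using (hasDerivAt_pow 3 (0:ℝ))
  · have : q' s = 3 * s ^ 2 := by simp [q', max_eq_left hs.le]
    rw [this]
    apply HasDerivAt.congr_of_eventuallyEq (f := fun t => t ^ 3)
    · simpa using (hasDerivAt_pow 3 s)
    · filter_upwards [eventually_gt_nhds hs] with t ht
      simp [q, max_eq_left ht.le]

lemma hasDerivAt_q' (s : ℝ) : HasDerivAt q' (q'' s) s := by
  rcases lt_trichotomy s 0 with hs | rfl | hs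
  · have : q'' s = 0 := by simp [q'', max_eq_right hs.le]
    rw [this]
    apply HasDerivAt.congr_of_eventuallyEq (f := fun _ => (0:ℝ)) (hasDerivAt_const _ _)
    filter_upwards [eventually_lt_nhds hs] with t ht
    simp [q', max_eq_right ht.le]
  · have h0 : q'' 0 = 0 := by simp [q'']
    rw [h0]
    apply glue (g := fun _ => (0:ℝ)) (h := fun s => 3 * s ^ 2)
    · intro x hx; simp [q', max_eq_right hx]
    · intro x hx; simp [q', max_eq_left hx]
    · exact hasDerivAt_const _ _
    · simpa using ((hasDerivAt_pow 2 (0:ℝ)).const_mul 3)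
  · have : q'' s = 6 * s := by simp [q'', max_eq_left hs.le]
    rw [this]
    apply HasDerivAt.congr_of_eventuallyEq (f := fun t => 3 * t ^ 2)
    · have := (hasDerivAt_pow 2 s).const_mul (3:ℝ)
      exact this.congr_deriv (by ring)
    · filter_upwards [eventually_gt_nhds hs] with t ht
      simp [q', max_eq_left ht.le]

lemma continuous_q'' : Continuous q'' := by
  unfold q''; fun_prop

lemma key_alg {α β : ℝ} (hβ : 0 ≤ β) (H : ∀ t : ℝ, 0 ≤ t * α + t ^ 2 * β) : α = 0 := by
  have hb : (0:ℝ) < β + 1 := by linarith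
  have h1 := H (-(α / (β + 1)))
  have h2 : -(α / (β + 1)) * α + (-(α / (β + 1))) ^ 2 * β =
      (-α ^ 2 * (β + 1) + α ^ 2 * β) / (β + 1) ^ 2 := by
    field_simp
  rw [h2] at h1
  have h3 : -α ^ 2 * (β + 1) + α ^ 2 * β = -α ^ 2 := by ring
  rw [h3] at h1
  have h4 : 0 ≤ -α ^ 2 := by
    by_contra hc
    push_neg at hc
    have : -α ^ 2 / (β + 1) ^ 2 < 0 := div_neg_of_neg_of_pos hc (by positivity)
    linarith
  nlinarith [sq_nonneg α]


/-- Hermite coefficient A -/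
def Ac (x x' v v' : E) : E := (3:ℝ) • (x' - x) - (2:ℝ) • v - v'

/-- Hermite coefficient B -/
def Bc (x x' v v' : E) : E := v + v' - (2:ℝ) • (x' - x)

lemma splineCost_ABC (x x' v v' : E) :
    splineCost x x' v v' = 4 * ‖Ac x x' v v'‖ ^ 2 + 12 * ⟪Ac x x' v v', Bc x x' v v'⟫ +
      12 * ‖Bc x x' v v'‖ ^ 2 := by
  simp only [splineCost, Ac, Bc, ← real_inner_self_eq_norm_sq, inner_sub_left, inner_sub_right,
    inner_add_left, inner_add_right, real_inner_smul_left, real_inner_smul_right]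
  linarith [real_inner_comm x x', real_inner_comm x v, real_inner_comm x v',
    real_inner_comm x' v, real_inner_comm x' v', real_inner_comm v v']

lemma splineCost_pert (x x' v v' a a' : E) :
    splineCost x x' (v + a) (v' + a') = splineCost x x' v v'
      + (⟪(-12:ℝ) • (x' - x) + (8:ℝ) • v + (4:ℝ) • v', a⟫
         + ⟪(-12:ℝ) • (x' - x) + (4:ℝ) • v + (8:ℝ) • v', a'⟫)
      + (4 * ‖a‖ ^ 2 + 4 * ⟪a, a'⟫ + 4 * ‖a'‖ ^ 2) := by
  simp only [splineCost, ← real_inner_self_eq_norm_sq, inner_sub_left, inner_sub_right,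
    inner_add_left, inner_add_right, real_inner_smul_left, real_inner_smul_right]
  linarith [real_inner_comm x x', real_inner_comm x v, real_inner_comm x v',
    real_inner_comm x' v, real_inner_comm x' v', real_inner_comm v v',
    real_inner_comm x a, real_inner_comm x a', real_inner_comm x' a, real_inner_comm x' a',
    real_inner_comm v a, real_inner_comm v a', real_inner_comm v' a, real_inner_comm v' a',
    real_inner_comm a a']

lemma quad_nonneg (a a' : E) : 0 ≤ 4 * ‖a‖ ^ 2 + 4 * ⟪a, a'⟫ + 4 * ‖a'‖ ^ 2 := by
  have h := abs_real_inner_le_norm a a'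
  have h2 := abs_le.mp h
  nlinarith [sq_nonneg (‖a‖ - ‖a'‖)]


lemma AB_sum (x x' v v' : E) : Ac x x' v v' + Bc x x' v v' = x' - x - v := by
  simp only [Ac, Bc]; module

lemma AB_sum2 (x x' v v' : E) :
    (2:ℝ) • Ac x x' v v' + (3:ℝ) • Bc x x' v v' = v' - v := by
  simp only [Ac, Bc]; module

lemma norm_p2_sq (A B : E) (s : ℝ) :
    ‖(2:ℝ) • A + (6 * s) • B‖ ^ 2 = 4 * ‖A‖ ^ 2 + 24 * s * ⟪A, B⟫ + 36 * s ^ 2 * ‖B‖ ^ 2 := by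
  simp only [← real_inner_self_eq_norm_sq, inner_add_left, inner_add_right,
    real_inner_smul_left, real_inner_smul_right, real_inner_comm B A]
  ring

lemma integral_p2_sq (A B : E) (a : ℝ) :
    ∫ t in a..(a + 1), ‖(2:ℝ) • A + (6 * (t - a)) • B‖ ^ 2 =
      4 * ‖A‖ ^ 2 + 12 * ⟪A, B⟫ + 12 * ‖B‖ ^ 2 := by
  set G : ℝ → ℝ :=
    fun t => 4 * ‖A‖ ^ 2 * (t - a) + 12 * ⟪A, B⟫ * (t - a) ^ 2 + 12 * ‖B‖ ^ 2 * (t - a) ^ 3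
    with hG
  have key : ∫ t in a..(a + 1), ‖(2:ℝ) • A + (6 * (t - a)) • B‖ ^ 2 = G (a + 1) - G a := by
    apply integral_eq_sub_of_hasDerivAt
    · intro t _
      have hb : HasDerivAt (fun t : ℝ => t - a) 1 t := (hasDerivAt_id t).sub_const a
      have h1 : HasDerivAt (fun t : ℝ => (t - a) ^ 2) (2 * (t - a)) t := by
        simpa using hb.fun_pow 2
      have h2 : HasDerivAt (fun t : ℝ => (t - a) ^ 3) (3 * (t - a) ^ 2) t := by
        simpa using hb.fun_pow 3
      have := ((hb.const_mul (4 * ‖A‖ ^ 2)).fun_add (h1.const_mul (12 * ⟪A, B⟫))).fun_add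
        (h2.const_mul (12 * ‖B‖ ^ 2))
      convert this using 1
      rw [norm_p2_sq]
      ring
    · apply Continuous.intervalIntegrable
      fun_prop
  rw [key, hG]
  ring

lemma segLow (X : ℝ → E) (hX1 : Differentiable ℝ X) (hX2 : Differentiable ℝ (deriv X))
    (hWc : Continuous (deriv (deriv X))) (a : ℝ) :
    splineCost (X a) (X (a + 1)) (deriv X a) (deriv X (a + 1)) ≤
      ∫ t in a..(a + 1), ‖deriv (deriv X) t‖ ^ 2 := by
  set x := X a
  set x' := X (a + 1)
  set v := deriv X a
  set v' := deriv X (a + 1)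
  set A := Ac x x' v v' with hA
  set B := Bc x x' v v' with hB
  set W := deriv (deriv X) with hW
  -- the Hermite cubic and its derivatives
  set p : ℝ → E := fun t => x + (t - a) • v + ((t - a) ^ 2) • A + ((t - a) ^ 3) • B with hp
  set p1 : ℝ → E := fun t => v + (2 * (t - a)) • A + (3 * (t - a) ^ 2) • B with hp1
  set p2 : ℝ → E := fun t => (2:ℝ) • A + (6 * (t - a)) • B with hp2
  have hb : ∀ t : ℝ, HasDerivAt (fun t : ℝ => t - a) 1 t := fun t => (hasDerivAt_id t).sub_const a
  have hsq : ∀ t : ℝ, HasDerivAt (fun t : ℝ => (t - a) ^ 2) (2 * (t - a)) t := fun t => by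
    simpa using (hb t).fun_pow 2
  have hcub : ∀ t : ℝ, HasDerivAt (fun t : ℝ => (t - a) ^ 3) (3 * (t - a) ^ 2) t := fun t => by
    simpa using (hb t).fun_pow 3
  have hpd : ∀ t, HasDerivAt p (p1 t) t := by
    intro t
    have := (((hb t).smul_const v).const_add x).fun_add
      (((hsq t).smul_const A).fun_add ((hcub t).smul_const B))
    refine (this.congr_of_eventuallyEq ?_).congr_deriv ?_
    · exact Filter.Eventually.of_forall fun s => by simp [hp]; module
    · simp [hp1]; module
  have hp1d : ∀ t, HasDerivAt p1 (p2 t) t := by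
    intro t
    have := ((((hb t).const_mul 2).smul_const A).const_add v).fun_add
      (((hsq t).const_mul 3).smul_const B)
    refine this.congr_deriv ?_
    simp [hp2]
    module
  have hp2d : ∀ t, HasDerivAt p2 ((6:ℝ) • B) t := by
    intro t
    have := (((hb t).const_mul 6).smul_const B).const_add ((2:ℝ) • A)
    refine this.congr_deriv ?_
    module
  have hpa : p a = x := by simp [hp]
  have hp1a : p1 a = v := by simp [hp1]
  have hpb : p (a + 1) = x' := by
    have h := AB_sum x x' v v'
    simp only [hp, add_sub_cancel_left, one_pow, one_smul]
    rw [show x' = x + v + (x' - x - v) by abel, ← h]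
    abel
  have hp1b : p1 (a + 1) = v' := by
    have h := AB_sum2 x x' v v'
    simp only [hp1, add_sub_cancel_left, one_pow, mul_one]
    rw [show v' = v + (v' - v) by abel, ← h]
    module
  have hpc : Continuous p := by fun_prop
  have hp1c : Continuous p1 := by fun_prop
  have hp2c : Continuous p2 := by fun_prop
  have hXc : Continuous X := hX1.continuous
  have hX1c : Continuous (deriv X) := hX2.continuous
  set H : ℝ → ℝ := fun t => ⟪p2 t, deriv X t - p1 t⟫ - ⟪(6:ℝ) • B, X t - p t⟫ with hHdef
  have hHd : ∀ t, HasDerivAt H (⟪p2 t, W t - p2 t⟫) t := by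
    intro t
    have hXd : HasDerivAt X (deriv X t) t := (hX1 t).hasDerivAt
    have hX2d : HasDerivAt (deriv X) (W t) t := (hX2 t).hasDerivAt
    have h1 := HasDerivAt.inner ℝ (hp2d t) (hX2d.fun_sub (hp1d t))
    have h2 := HasDerivAt.inner ℝ (hasDerivAt_const t ((6:ℝ) • B)) (hXd.fun_sub (hpd t))
    have h3 := h1.fun_sub h2
    refine h3.congr_deriv ?_
    simp [inner_zero_left, inner_sub_right]
  have hWPc : Continuous fun t => ⟪p2 t, W t - p2 t⟫ := by
    exact (hp2c.inner ((hWc.sub hp2c)))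
  have hzero : ∫ t in a..(a + 1), ⟪p2 t, W t - p2 t⟫ = 0 := by
    rw [integral_eq_sub_of_hasDerivAt (fun t _ => hHd t) (hWPc.intervalIntegrable _ _)]
    simp [hHdef, hp1b, hpb, hp1a, hpa, sub_self, x, x', v, v']
  have hpt : ∀ t, ‖W t‖ ^ 2 =
      ‖p2 t‖ ^ 2 + 2 * ⟪p2 t, W t - p2 t⟫ + ‖W t - p2 t‖ ^ 2 := by
    intro t
    have h := norm_add_sq_real (p2 t) (W t - p2 t)
    rw [show p2 t + (W t - p2 t) = W t by abel] at h
    linarith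
  have hi1 : IntervalIntegrable (fun t => ‖p2 t‖ ^ 2) volume a (a + 1) :=
    (hp2c.norm.pow 2).intervalIntegrable _ _
  have hi2 : IntervalIntegrable (fun t => 2 * ⟪p2 t, W t - p2 t⟫) volume a (a + 1) :=
    ((continuous_const.mul hWPc)).intervalIntegrable _ _
  have hi3 : IntervalIntegrable (fun t => ‖W t - p2 t‖ ^ 2) volume a (a + 1) :=
    (((hWc.sub hp2c).norm.pow 2)).intervalIntegrable _ _
  have hsplit : ∫ t in a..(a + 1), ‖W t‖ ^ 2 =
      (∫ t in a..(a + 1), ‖p2 t‖ ^ 2) + (∫ t in a..(a + 1), 2 * ⟪p2 t, W t - p2 t⟫) +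
        ∫ t in a..(a + 1), ‖W t - p2 t‖ ^ 2 := by
    rw [← integral_add hi1 hi2, ← integral_add (hi1.add hi2) hi3]
    apply integral_congr
    intro t _
    exact hpt t
  have h2z : (∫ t in a..(a + 1), 2 * ⟪p2 t, W t - p2 t⟫) = 0 := by
    rw [intervalIntegral.integral_const_mul, hzero, mul_zero]
  have h3nn : 0 ≤ ∫ t in a..(a + 1), ‖W t - p2 t‖ ^ 2 := by
    apply integral_nonneg (by linarith)
    intro t _
    positivity
  have h1v : (∫ t in a..(a + 1), ‖p2 t‖ ^ 2) =
      4 * ‖A‖ ^ 2 + 12 * ⟪A, B⟫ + 12 * ‖B‖ ^ 2 := integral_p2_sq A B a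
  rw [splineCost_ABC, ← hA, ← hB]
  rw [hsplit, h1v, h2z]
  linarith


lemma q_of_nonpos {s : ℝ} (h : s ≤ 0) : q s = 0 := by simp [q, max_eq_right h]
lemma q_of_nonneg {s : ℝ} (h : 0 ≤ s) : q s = s ^ 3 := by simp [q, max_eq_left h]
lemma q''_of_nonpos {s : ℝ} (h : s ≤ 0) : q'' s = 0 := by simp [q'', max_eq_right h]
lemma q''_of_nonneg {s : ℝ} (h : 0 ≤ s) : q'' s = 6 * s := by simp [q'', max_eq_left h]

lemma spline_exists (N : ℕ) (hN : 1 ≤ N) (x v : ℕ → E)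
    (hrel : ∀ j, j + 1 < N → Ac (x (j+1)) (x (j+2)) (v (j+1)) (v (j+2)) =
      Ac (x j) (x (j+1)) (v j) (v (j+1)) + (3:ℝ) • Bc (x j) (x (j+1)) (v j) (v (j+1))) :
    ∃ X : ℝ → E, ContDiff ℝ 2 X ∧ (∀ n : ℕ, n ≤ N → X (n : ℝ) = x n) ∧
      (∫ t in (0:ℝ)..(N:ℝ), ‖deriv (deriv X) t‖ ^ 2) =
        ∑ i ∈ Finset.range N, splineCost (x i) (x (i+1)) (v i) (v (i+1)) := by
  set A : ℕ → E := fun i => Ac (x i) (x (i+1)) (v i) (v (i+1)) with hAdef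
  set B : ℕ → E := fun i => Bc (x i) (x (i+1)) (v i) (v (i+1)) with hBdef
  set e : ℕ → E := fun j => B j - (if j = 0 then 0 else B (j - 1)) with hedef
  have he0 : e 0 = B 0 := by simp [hedef]
  have heS : ∀ j : ℕ, e (j + 1) = B (j + 1) - B j := by intro j; simp [hedef]
  set S : ℝ → E := fun t => x 0 + t • v 0 + (t ^ 2) • A 0 +
    ∑ j ∈ Finset.range N, q (t - j) • e j with hSdef
  set S1 : ℝ → E := fun t => v 0 + (2 * t) • A 0 +
    ∑ j ∈ Finset.range N, q' (t - j) • e j with hS1def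
  set S2 : ℝ → E := fun t => (2:ℝ) • A 0 +
    ∑ j ∈ Finset.range N, q'' (t - j) • e j with hS2def
  have hSd : ∀ t, HasDerivAt S (S1 t) t := by
    intro t
    have h1 : HasDerivAt (fun t : ℝ => x 0 + t • v 0 + (t ^ 2) • A 0)
        (v 0 + (2 * t) • A 0) t := by
      have ha := ((hasDerivAt_id t).smul_const (v 0)).const_add (x 0)
      have hb := (hasDerivAt_pow 2 t).smul_const (A 0)
      have := ha.fun_add hb
      refine this.congr_deriv ?_
      simp
    have h2 : HasDerivAt (fun t : ℝ => ∑ j ∈ Finset.range N, q (t - j) • e j)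
        (∑ j ∈ Finset.range N, q' (t - j) • e j) t := by
      apply HasDerivAt.fun_sum
      intro j _
      have hc : HasDerivAt (fun t : ℝ => q (t - j)) (q' (t - j)) t := by
        have := (hasDerivAt_q (t - j)).comp t ((hasDerivAt_id t).sub_const (j : ℝ))
        exact this.congr_deriv (mul_one _)
      exact hc.smul_const (e j)
    exact h1.add h2
  have hS1d : ∀ t, HasDerivAt S1 (S2 t) t := by
    intro t
    have h1 : HasDerivAt (fun t : ℝ => v 0 + (2 * t) • A 0) ((2:ℝ) • A 0) t := by
      have := (((hasDerivAt_id t).const_mul 2).smul_const (A 0)).const_add (v 0)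
      refine this.congr_deriv ?_
      simp
    have h2 : HasDerivAt (fun t : ℝ => ∑ j ∈ Finset.range N, q' (t - j) • e j)
        (∑ j ∈ Finset.range N, q'' (t - j) • e j) t := by
      apply HasDerivAt.fun_sum
      intro j _
      have hc : HasDerivAt (fun t : ℝ => q' (t - j)) (q'' (t - j)) t := by
        have := (hasDerivAt_q' (t - j)).comp t ((hasDerivAt_id t).sub_const (j : ℝ))
        exact this.congr_deriv (mul_one _)
      exact hc.smul_const (e j)
    exact h1.add h2
  have hS2c : Continuous S2 := by
    apply Continuous.add continuous_const
    apply continuous_finset_sum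
    intro j _
    exact (continuous_q''.comp (continuous_id.sub continuous_const)).smul continuous_const
  have hderivS : deriv S = S1 := funext fun t => (hSd t).deriv
  have hderivS1 : deriv S1 = S2 := funext fun t => (hS1d t).deriv
  have hC2 : ContDiff ℝ 2 S := by
    rw [show (2 : WithTop ℕ∞) = 1 + 1 by norm_num]
    rw [contDiff_succ_iff_deriv]
    refine ⟨fun t => (hSd t).differentiableAt, by simp, ?_⟩
    rw [hderivS, contDiff_one_iff_deriv]
    exact ⟨fun t => (hS1d t).differentiableAt, by rw [hderivS1]; exact hS2c⟩
  -- structural relations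
  have rx : ∀ i, x (i+1) = x i + v i + (A i + B i) := by
    intro i
    simp only [hAdef, hBdef]
    rw [AB_sum]
    abel
  have rv : ∀ i, v (i+1) = v i + ((2:ℝ) • A i + (3:ℝ) • B i) := by
    intro i
    simp only [hAdef, hBdef]
    rw [AB_sum2]
    abel
  have rA : ∀ i, i + 1 < N → A (i+1) = A i + (3:ℝ) • B i := by
    intro i hi
    simp only [hAdef, hBdef]
    exact hrel i hi
  -- polynomial identities on segments
  have claim1 : ∀ i, i < N → ∀ t : ℝ,
      x 0 + t • v 0 + (t ^ 2) • A 0 + ∑ j ∈ Finset.range (i+1), ((t - j) ^ 3) • e j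
        = x i + (t - i) • v i + ((t - i) ^ 2) • A i + ((t - i) ^ 3) • B i := by
    intro i
    induction i with
    | zero => intro _ t; simp [Finset.sum_range_one, he0]
    | succ i ih =>
      intro hi t
      have hiN : i < N := by omega
      rw [Finset.sum_range_succ, ← add_assoc, ih hiN t, heS]
      rw [rx i, rv i, rA i hi]
      push_cast
      match_scalars <;> ring
  have claim2 : ∀ i, i < N → ∀ t : ℝ,
      (2:ℝ) • A 0 + ∑ j ∈ Finset.range (i+1), (6 * (t - j)) • e j
        = (2:ℝ) • A i + (6 * (t - i)) • B i := by
    intro i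
    induction i with
    | zero => intro _ t; simp [Finset.sum_range_one, he0]
    | succ i ih =>
      intro hi t
      have hiN : i < N := by omega
      rw [Finset.sum_range_succ, ← add_assoc, ih hiN t, heS]
      rw [rA i hi]
      push_cast
      match_scalars <;> ring
  -- values at knots
  have hval : ∀ n : ℕ, n ≤ N → S (n : ℝ) = x n := by
    intro n hn
    by_cases hnN : n < N
    · have h1 : ∑ j ∈ Finset.range N, q ((n:ℝ) - j) • e j
          = ∑ j ∈ Finset.range (n+1), q ((n:ℝ) - j) • e j := by
        refine (Finset.sum_subset (Finset.range_subset_range.mpr (by omega)) ?_).symm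
        intro j hjN hj
        have hj' : n + 1 ≤ j := by
          simp only [Finset.mem_range, not_lt] at hj
          exact hj
        have : (n:ℝ) ≤ j := by exact_mod_cast (by omega : n ≤ j)
        rw [q_of_nonpos (by linarith), zero_smul]
      have h2 : ∑ j ∈ Finset.range (n+1), q ((n:ℝ) - j) • e j
          = ∑ j ∈ Finset.range (n+1), (((n:ℝ) - j) ^ 3) • e j := by
        apply Finset.sum_congr rfl
        intro j hj
        have hj' : j ≤ n := Nat.lt_succ_iff.mp (Finset.mem_range.mp hj)
        have : (j:ℝ) ≤ n := by exact_mod_cast hj'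
        rw [q_of_nonneg (by linarith)]
      simp only [hSdef]
      rw [h1, h2, claim1 n hnN (n:ℝ)]
      simp
    · have hnN' : n = N := by omega
      obtain ⟨m, rfl⟩ : ∃ m, n = m + 1 := ⟨n - 1, by omega⟩
      have hmN : m < N := by omega
      have hNm : N = m + 1 := by omega
      have h2 : ∑ j ∈ Finset.range N, q (((m+1:ℕ):ℝ) - j) • e j
          = ∑ j ∈ Finset.range (m+1), ((((m+1:ℕ):ℝ) - j) ^ 3) • e j := by
        rw [hNm]
        apply Finset.sum_congr rfl
        intro j hj
        have hj' : j ≤ m := Nat.lt_succ_iff.mp (Finset.mem_range.mp hj)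
        have : (j:ℝ) ≤ m := by exact_mod_cast hj'
        have hcast : (0:ℝ) ≤ ((m+1:ℕ):ℝ) - j := by push_cast; linarith
        rw [q_of_nonneg hcast]
      simp only [hSdef]
      rw [h2, claim1 m hmN (((m+1:ℕ)):ℝ)]
      have hc1 : ((m+1:ℕ):ℝ) - (m:ℝ) = 1 := by push_cast; ring
      rw [hc1, rx m]
      simp
      abel
  -- energy
  have hDD : deriv (deriv S) = S2 := by rw [hderivS, hderivS1]
  have hseg : ∀ i, i < N → (∫ t in ((i:ℕ):ℝ)..(((i+1:ℕ)):ℝ), ‖S2 t‖ ^ 2)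
      = splineCost (x i) (x (i+1)) (v i) (v (i+1)) := by
    intro i hiN
    have hEq : Set.EqOn (fun t => ‖S2 t‖ ^ 2)
        (fun t => ‖(2:ℝ) • A i + (6 * (t - i)) • B i‖ ^ 2) (uIcc ((i:ℕ):ℝ) ((i+1:ℕ):ℝ)) := by
      intro t ht
      have hle : ((i:ℕ):ℝ) ≤ ((i+1:ℕ):ℝ) := by push_cast; linarith
      rw [uIcc_of_le hle] at ht
      obtain ⟨ht1, ht2⟩ := ht
      have ht2' : t ≤ (i:ℝ) + 1 := by push_cast at ht2; linarith
      have h1 : ∑ j ∈ Finset.range N, q'' (t - j) • e j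
          = ∑ j ∈ Finset.range (i+1), q'' (t - j) • e j := by
        refine (Finset.sum_subset (Finset.range_subset_range.mpr (by omega)) ?_).symm
        intro j hjN hj
        have hj' : i + 1 ≤ j := by
          simp only [Finset.mem_range, not_lt] at hj
          exact hj
        have : (i:ℝ) + 1 ≤ j := by exact_mod_cast hj'
        rw [q''_of_nonpos (by linarith), zero_smul]
      have h2 : ∑ j ∈ Finset.range (i+1), q'' (t - j) • e j
          = ∑ j ∈ Finset.range (i+1), (6 * (t - j)) • e j := by
        apply Finset.sum_congr rfl
        intro j hj
        have hj' : j ≤ i := Nat.lt_succ_iff.mp (Finset.mem_range.mp hj)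
        have : (j:ℝ) ≤ i := by exact_mod_cast hj'
        rw [q''_of_nonneg (by linarith)]
      simp only [hS2def]
      rw [h1, h2, claim2 i hiN t]
    rw [intervalIntegral.integral_congr hEq]
    have hcast : (((i+1:ℕ)):ℝ) = ((i:ℕ):ℝ) + 1 := by push_cast; ring
    rw [hcast, integral_p2_sq (A i) (B i) ((i:ℕ):ℝ), splineCost_ABC]
  have hsum : ∑ i ∈ Finset.range N, ∫ t in ((i:ℕ):ℝ)..(((i+1:ℕ)):ℝ), ‖S2 t‖ ^ 2
      = ∫ t in (((0:ℕ)):ℝ)..((N:ℕ):ℝ), ‖S2 t‖ ^ 2 := by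
    apply intervalIntegral.sum_integral_adjacent_intervals
    intro k _
    exact (hS2c.norm.pow 2).intervalIntegrable _ _
  refine ⟨S, hC2, hval, ?_⟩
  rw [hDD]
  have : (∫ t in (0:ℝ)..(N:ℝ), ‖S2 t‖ ^ 2) = ∫ t in (((0:ℕ)):ℝ)..((N:ℕ):ℝ), ‖S2 t‖ ^ 2 := by
    norm_num
  rw [this, ← hsum]
  apply Finset.sum_congr rfl
  intro i hi
  exact hseg i (Finset.mem_range.mp hi)


variable {N : ℕ}

/-- extension of a `Fin (N+1)`-indexed family to `ℕ` -/
def xe {N : ℕ} (x : Fin (N + 1) → E) : ℕ → E :=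
  fun n => if h : n < N + 1 then x ⟨n, h⟩ else 0

variable {N : ℕ}

lemma xe_fin (x : Fin (N + 1) → E) (i : Fin (N + 1)) : xe x (i : ℕ) = x i := by
  simp only [xe, i.isLt, dif_pos, Fin.eta]

lemma xe_castSucc (x : Fin (N + 1) → E) (i : Fin N) : xe x (i : ℕ) = x i.castSucc := by
  have : xe x ((i.castSucc : Fin (N+1)) : ℕ) = x i.castSucc := xe_fin x i.castSucc
  simpa using this

lemma xe_succ (x : Fin (N + 1) → E) (i : Fin N) : xe x ((i : ℕ) + 1) = x i.succ := by
  have : xe x ((i.succ : Fin (N+1)) : ℕ) = x i.succ := xe_fin x i.succ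
  simpa using this

lemma xe_add (x y : Fin (N + 1) → E) (n : ℕ) : xe (x + y) n = xe x n + xe y n := by
  simp only [xe]; split <;> simp

lemma xe_smul (c : ℝ) (x : Fin (N + 1) → E) (n : ℕ) : xe (c • x) n = c • xe x n := by
  simp only [xe]; split <;> simp

/-- the discrete energy, `Fin`-indexed as in the theorem statement -/
def Ffun (x v : Fin (N + 1) → E) : ℝ :=
  ∑ i : Fin N, splineCost (x i.castSucc) (x i.succ) (v i.castSucc) (v i.succ)

lemma Ffun_eq (x v : Fin (N + 1) → E) :
    Ffun x v = ∑ n ∈ Finset.range N,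
      splineCost (xe x n) (xe x (n+1)) (xe v n) (xe v (n+1)) := by
  rw [← Fin.sum_univ_eq_sum_range
    (fun n => splineCost (xe x n) (xe x (n+1)) (xe v n) (xe v (n+1))) N]
  apply Finset.sum_congr rfl
  intro i _
  rw [xe_castSucc, xe_succ, xe_castSucc, xe_succ]

def pvv (x v : ℕ → E) (n : ℕ) : E :=
  (-12:ℝ) • (x (n+1) - x n) + (8:ℝ) • v n + (4:ℝ) • v (n+1)

def rvv (x v : ℕ → E) (n : ℕ) : E :=
  (-12:ℝ) • (x (n+1) - x n) + (4:ℝ) • v n + (8:ℝ) • v (n+1)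

def LinF (x v h : Fin (N + 1) → E) : ℝ :=
  ∑ n ∈ Finset.range N, (⟪pvv (xe x) (xe v) n, xe h n⟫ + ⟪rvv (xe x) (xe v) n, xe h (n+1)⟫)

def QF (h : Fin (N + 1) → E) : ℝ :=
  ∑ n ∈ Finset.range N, (4 * ‖xe h n‖ ^ 2 + 4 * ⟪xe h n, xe h (n+1)⟫ + 4 * ‖xe h (n+1)‖ ^ 2)

lemma Ffun_pert (x v h : Fin (N + 1) → E) :
    Ffun x (v + h) = Ffun x v + LinF x v h + QF h := by
  rw [Ffun_eq, Ffun_eq, LinF, QF, ← Finset.sum_add_distrib, ← Finset.sum_add_distrib]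
  apply Finset.sum_congr rfl
  intro n _
  rw [xe_add, xe_add]
  rw [splineCost_pert]
  rfl

lemma QF_nonneg (h : Fin (N + 1) → E) : 0 ≤ QF h :=
  Finset.sum_nonneg fun n _ => quad_nonneg _ _

lemma LinF_smul (x v : Fin (N + 1) → E) (t : ℝ) (h : Fin (N + 1) → E) :
    LinF x v (t • h) = t * LinF x v h := by
  rw [LinF, LinF, Finset.mul_sum]
  apply Finset.sum_congr rfl
  intro n _
  rw [xe_smul, xe_smul, real_inner_smul_right, real_inner_smul_right]
  ring

lemma QF_smul (t : ℝ) (h : Fin (N + 1) → E) : QF (t • h) = t ^ 2 * QF h := by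
  rw [QF, QF, Finset.mul_sum]
  apply Finset.sum_congr rfl
  intro n _
  rw [xe_smul, xe_smul, real_inner_smul_right, real_inner_smul_left, norm_smul, norm_smul]
  simp [mul_pow]
  ring

lemma LinF_zero_of_min {x v : Fin (N + 1) → E} (hmin : ∀ w, Ffun x v ≤ Ffun x w)
    (h : Fin (N + 1) → E) : LinF x v h = 0 := by
  apply key_alg (QF_nonneg h)
  intro t
  have h1 := hmin (v + t • h)
  rw [Ffun_pert, LinF_smul, QF_smul] at h1
  linarith

lemma min_of_LinF_zero {x v : Fin (N + 1) → E} (hlin : ∀ h, LinF x v h = 0) :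
    ∀ w, Ffun x v ≤ Ffun x w := by
  intro w
  have h1 := Ffun_pert x v (w - v)
  rw [add_sub_cancel] at h1
  rw [h1, hlin (w - v)]
  have := QF_nonneg (w - v)
  linarith

lemma LinF_add (x y v u h : Fin (N + 1) → E) :
    LinF (x + y) (v + u) h = LinF x v h + LinF y u h := by
  rw [LinF, LinF, LinF, ← Finset.sum_add_distrib]
  apply Finset.sum_congr rfl
  intro n _
  have hp : pvv (xe (x + y)) (xe (v + u)) n = pvv (xe x) (xe v) n + pvv (xe y) (xe u) n := by
    simp only [pvv, xe_add]; module
  have hr : rvv (xe (x + y)) (xe (v + u)) n = rvv (xe x) (xe v) n + rvv (xe y) (xe u) n := by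
    simp only [rvv, xe_add]; module
  rw [hp, hr, inner_add_left, inner_add_left]
  ring

lemma LinF_smulc (c : ℝ) (x v h : Fin (N + 1) → E) :
    LinF (c • x) (c • v) h = c * LinF x v h := by
  rw [LinF, LinF, Finset.mul_sum]
  apply Finset.sum_congr rfl
  intro n _
  have hp : pvv (xe (c • x)) (xe (c • v)) n = c • pvv (xe x) (xe v) n := by
    simp only [pvv, xe_smul]; module
  have hr : rvv (xe (c • x)) (xe (c • v)) n = c • rvv (xe x) (xe v) n := by
    simp only [rvv, xe_smul]; module
  rw [hp, hr, real_inner_smul_left, real_inner_smul_left]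
  ring


-- ### single-site first-order conditions

lemma pvrv_zero {x v : Fin (N + 1) → E} (hmin : ∀ w, Ffun x v ≤ Ffun x w)
    {j : ℕ} (hj : j + 1 < N) :
    pvv (xe x) (xe v) (j+1) + rvv (xe x) (xe v) j = 0 := by
  have hk : j + 1 < N + 1 := by omega
  set k : Fin (N + 1) := ⟨j + 1, hk⟩ with hkdef
  have hsingle : ∀ u : E, LinF x v (Pi.single k u)
      = ⟪pvv (xe x) (xe v) (j+1) + rvv (xe x) (xe v) j, u⟫ := by
    intro u
    have hxe : ∀ n : ℕ, xe (Pi.single k u) n = if n = j + 1 then u else 0 := by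
      intro n
      by_cases hn : n < N + 1
      · simp only [xe, dif_pos hn, Pi.single_apply]
        simp [hkdef, Fin.ext_iff]
      · simp only [xe, dif_neg hn]
        rw [if_neg]
        omega
    have hterm : ∀ n, (⟪pvv (xe x) (xe v) n, xe (Pi.single k u) n⟫
          + ⟪rvv (xe x) (xe v) n, xe (Pi.single k u) (n+1)⟫)
        = (if n = j + 1 then ⟪pvv (xe x) (xe v) n, u⟫ else 0)
          + (if n = j then ⟪rvv (xe x) (xe v) n, u⟫ else 0) := by
      intro n
      rw [hxe n, hxe (n+1)]
      congr 1
      · by_cases h : n = j + 1 <;> simp [h]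
      · by_cases h : n = j
        · subst h; simp
        · have h2 : n + 1 ≠ j + 1 := by omega
          simp [h, h2]
    rw [LinF, Finset.sum_congr rfl (fun n _ => hterm n), Finset.sum_add_distrib,
      Finset.sum_ite_eq' (Finset.range N) (j+1), Finset.sum_ite_eq' (Finset.range N) j,
      if_pos (Finset.mem_range.mpr hj), if_pos (Finset.mem_range.mpr (by omega : j < N)),
      inner_add_left]
  have h0 := LinF_zero_of_min hmin (Pi.single k (pvv (xe x) (xe v) (j+1) + rvv (xe x) (xe v) j))
  rw [hsingle] at h0
  exact inner_self_eq_zero.mp h0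

lemma hrel_of_min {x v : Fin (N + 1) → E} (hmin : ∀ w, Ffun x v ≤ Ffun x w) :
    ∀ j, j + 1 < N → Ac (xe x (j+1)) (xe x (j+2)) (xe v (j+1)) (xe v (j+2)) =
      Ac (xe x j) (xe x (j+1)) (xe v j) (xe v (j+1))
        + (3:ℝ) • Bc (xe x j) (xe x (j+1)) (xe v j) (xe v (j+1)) := by
  intro j hj
  have h0 := pvrv_zero hmin hj
  have h4 : (-4:ℝ) • (Ac (xe x (j+1)) (xe x (j+2)) (xe v (j+1)) (xe v (j+2))
      - (Ac (xe x j) (xe x (j+1)) (xe v j) (xe v (j+1))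
          + (3:ℝ) • Bc (xe x j) (xe x (j+1)) (xe v j) (xe v (j+1))))
      = pvv (xe x) (xe v) (j+1) + rvv (xe x) (xe v) j := by
    show _ = pvv (xe x) (xe v) (j+1) + rvv (xe x) (xe v) j
    have e2 : j + 1 + 1 = j + 2 := rfl
    simp only [pvv, rvv, Ac, Bc, e2]
    module
  rw [h0] at h4
  rcases smul_eq_zero.mp h4 with h | h
  · norm_num at h
  · exact sub_eq_zero.mp h

-- ### the multiCost identity

lemma multiCost_eq_min (hN : 1 ≤ N) (x v : Fin (N + 1) → E)
    (hmin : ∀ w, Ffun x v ≤ Ffun x w) :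
    multiCost N x = Ffun x v := by
  obtain ⟨X, hC2, hval, hE⟩ := spline_exists N hN (xe x) (xe v) (hrel_of_min hmin)
  set s : Set ℝ := { y : ℝ | ∃ X : ℝ → E, ContDiff ℝ 2 X ∧
      (∀ i : Fin (N + 1), X ((i : ℕ) : ℝ) = x i) ∧
      y = ∫ t in (0:ℝ)..(N:ℝ), ‖deriv (deriv X) t‖ ^ 2 } with hsdef
  have hmem : Ffun x v ∈ s := by
    refine ⟨X, hC2, ?_, ?_⟩
    · intro i
      rw [hval (i : ℕ) (by omega), xe_fin]
    · rw [Ffun_eq, ← hE]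
  have hbdd : BddBelow s := by
    refine ⟨0, fun y hy => ?_⟩
    obtain ⟨Y, hY, _, rfl⟩ := hy
    apply intervalIntegral.integral_nonneg (by positivity)
    intro t _
    positivity
  have hub : ∀ y ∈ s, Ffun x v ≤ y := by
    rintro y ⟨Y, hC2', hint, rfl⟩
    have h2 : ContDiff ℝ ((1:ℕ∞) + 1) Y := by
      have : ((1:ℕ∞) + 1 : WithTop ℕ∞) = 2 := by norm_num
      rw [this]
      exact hC2'
    obtain ⟨hd1, -, hc1⟩ := contDiff_succ_iff_deriv.mp h2
    obtain ⟨hd2, hc2⟩ := contDiff_one_iff_deriv.mp hc1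
    have hYval : ∀ n : ℕ, n ≤ N → Y (n : ℝ) = xe x n := by
      intro n hn
      have hn' : n < N + 1 := by omega
      have := hint ⟨n, hn'⟩
      simpa [xe, hn] using this
    have hsum : ∑ i ∈ Finset.range N, ∫ t in ((i:ℕ):ℝ)..(((i+1:ℕ)):ℝ), ‖deriv (deriv Y) t‖ ^ 2
        = ∫ t in (((0:ℕ)):ℝ)..((N:ℕ):ℝ), ‖deriv (deriv Y) t‖ ^ 2 := by
      apply intervalIntegral.sum_integral_adjacent_intervals
      intro k _
      exact (hc2.norm.pow 2).intervalIntegrable _ _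
    have hle1 : Ffun x v ≤ ∑ i ∈ Finset.range N,
        splineCost (xe x i) (xe x (i+1)) (deriv Y (i:ℝ)) (deriv Y ((i:ℝ) + 1)) := by
      have hm := hmin (fun i : Fin (N + 1) => deriv Y ((i : ℕ) : ℝ))
      rw [Ffun_eq x (fun i : Fin (N + 1) => deriv Y ((i : ℕ) : ℝ))] at hm
      refine le_trans hm (le_of_eq ?_)
      apply Finset.sum_congr rfl
      intro n hn
      have hn' : n < N := Finset.mem_range.mp hn
      have e1 : xe (fun i : Fin (N + 1) => deriv Y ((i : ℕ) : ℝ)) n = deriv Y (n : ℝ) := by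
        simp [xe, hn'.le]
      have e2 : xe (fun i : Fin (N + 1) => deriv Y ((i : ℕ) : ℝ)) (n+1) = deriv Y ((n:ℝ) + 1) := by
        have hlt : n + 1 < N + 1 := by omega
        have : ((n + 1 : ℕ) : ℝ) = (n : ℝ) + 1 := by push_cast; ring
        simp only [xe, dif_pos hlt]
        rw [this]
      rw [e1, e2]
    have hle2 : ∑ i ∈ Finset.range N,
        splineCost (xe x i) (xe x (i+1)) (deriv Y (i:ℝ)) (deriv Y ((i:ℝ) + 1))
        ≤ ∑ i ∈ Finset.range N, ∫ t in ((i:ℕ):ℝ)..(((i+1:ℕ)):ℝ), ‖deriv (deriv Y) t‖ ^ 2 := by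
      apply Finset.sum_le_sum
      intro i hi
      have hi' : i < N := Finset.mem_range.mp hi
      have hseg := segLow Y hd1 hd2 hc2 (i : ℝ)
      rw [hYval i (by omega)] at hseg
      have hcast : ((i:ℝ) + 1) = ((i + 1 : ℕ) : ℝ) := by push_cast; ring
      rw [hcast, hYval (i+1) (by omega), ← hcast] at hseg
      have hbounds : (((i+1:ℕ)):ℝ) = (i:ℝ) + 1 := by push_cast; ring
      rw [hbounds]
      exact hseg
    have hcast0 : (((0:ℕ)):ℝ) = (0:ℝ) := by norm_num
    rw [← hcast0]
    calc Ffun x v ≤ _ := hle1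
    _ ≤ _ := hle2
    _ = _ := hsum
  exact le_antisymm (csInf_le hbdd hmem) (le_csInf ⟨_, hmem⟩ hub)


end SplineAux

open SplineAux

set_option maxHeartbeats 1000000 in
/-- If `𝕍(x)` denotes the unique minimizer of
`(v₀,…,v_N) ↦ Σ_i c(x_i,x_{i+1},v_i,v_{i+1})` and `π̂` minimizes `∫ 𝒞 dπ` over
`Π(ρ₀,…,ρ_N)`, then `γ̂ = (id, 𝕍)_#π̂` minimizes the phase-space multimarginal
problem over `Γ(ρ₀,…,ρ_N)`. -/
theorem stmt11 (d N : ℕ) (hd : 1 ≤ d) (hN : 1 ≤ N)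
    (ρ : Fin (N + 1) → Measure (EuclideanSpace ℝ (Fin d)))
    (hprob : ∀ i, IsProbabilityMeasure (ρ i))
    (hmom : ∀ i, (∫⁻ z, ENNReal.ofReal (‖z‖ ^ 2) ∂(ρ i)) < ⊤)
    (V : (Fin (N + 1) → EuclideanSpace ℝ (Fin d)) →
        (Fin (N + 1) → EuclideanSpace ℝ (Fin d)))
    (hVmin : ∀ x w : Fin (N + 1) → EuclideanSpace ℝ (Fin d),
      (∑ i : Fin N, splineCost (x i.castSucc) (x i.succ) (V x i.castSucc) (V x i.succ)) ≤
        ∑ i : Fin N, splineCost (x i.castSucc) (x i.succ) (w i.castSucc) (w i.succ))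
    (hVuniq : ∀ x w : Fin (N + 1) → EuclideanSpace ℝ (Fin d),
      (∀ u : Fin (N + 1) → EuclideanSpace ℝ (Fin d),
        (∑ i : Fin N, splineCost (x i.castSucc) (x i.succ) (w i.castSucc) (w i.succ)) ≤
          ∑ i : Fin N, splineCost (x i.castSucc) (x i.succ) (u i.castSucc) (u i.succ)) →
      w = V x)
    (π : Measure (Fin (N + 1) → EuclideanSpace ℝ (Fin d)))
    (hπ : IsProbabilityMeasure π) (hπm : ∀ i, π.map (fun y => y i) = ρ i)
    (hπopt : ∀ π' : Measure (Fin (N + 1) → EuclideanSpace ℝ (Fin d)),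
      IsProbabilityMeasure π' → (∀ i, π'.map (fun y => y i) = ρ i) →
      (∫⁻ y, ENNReal.ofReal (multiCost N y) ∂π) ≤
        ∫⁻ y, ENNReal.ofReal (multiCost N y) ∂π') :
    ∀ γ' : Measure ((Fin (N + 1) → EuclideanSpace ℝ (Fin d)) ×
        (Fin (N + 1) → EuclideanSpace ℝ (Fin d))),
      IsProbabilityMeasure γ' → (∀ i, γ'.map (fun p => p.1 i) = ρ i) →
      (∫⁻ p, ENNReal.ofReal (∑ i : Fin N,
          splineCost (p.1 i.castSucc) (p.1 i.succ) (p.2 i.castSucc) (p.2 i.succ))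
        ∂(π.map (fun x => (x, V x)))) ≤
        ∫⁻ p, ENNReal.ofReal (∑ i : Fin N,
          splineCost (p.1 i.castSucc) (p.1 i.succ) (p.2 i.castSucc) (p.2 i.succ)) ∂γ' := by
  intro γ' hγ' hγm
  -- V is linear
  have hVm : ∀ x w : Fin (N + 1) → EuclideanSpace ℝ (Fin d), Ffun x (V x) ≤ Ffun x w :=
    hVmin
  have hVadd : ∀ x y, V (x + y) = V x + V y := by
    intro x y
    have hm : ∀ w, Ffun (x + y) (V x + V y) ≤ Ffun (x + y) w := by
      apply min_of_LinF_zero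
      intro h
      rw [LinF_add, LinF_zero_of_min (hVm x) h, LinF_zero_of_min (hVm y) h, add_zero]
    exact (hVuniq (x + y) (V x + V y) hm).symm
  have hVsmul : ∀ (c : ℝ) x, V (c • x) = c • V x := by
    intro c x
    have hm : ∀ w, Ffun (c • x) (c • V x) ≤ Ffun (c • x) w := by
      apply min_of_LinF_zero
      intro h
      rw [LinF_smulc, LinF_zero_of_min (hVm x) h, mul_zero]
    exact (hVuniq (c • x) (c • V x) hm).symm
  have hVcont : Continuous V := by
    let Vl : (Fin (N + 1) → EuclideanSpace ℝ (Fin d)) →ₗ[ℝ]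
        (Fin (N + 1) → EuclideanSpace ℝ (Fin d)) :=
      { toFun := V, map_add' := hVadd, map_smul' := hVsmul }
    exact Vl.continuous_of_finiteDimensional
  have hVmeas : Measurable V := hVcont.measurable
  -- the multiCost identity
  have hMC : ∀ x, multiCost N x = Ffun x (V x) := fun x =>
    multiCost_eq_min hN x (V x) (hVm x)
  -- continuity of the costs
  have hCc : Continuous fun p : ((Fin (N + 1) → EuclideanSpace ℝ (Fin d)) ×
      (Fin (N + 1) → EuclideanSpace ℝ (Fin d))) => Ffun p.1 p.2 := by
    unfold Ffun splineCost
    apply continuous_finset_sum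
    intro i _
    have h1 : Continuous fun p : ((Fin (N + 1) → EuclideanSpace ℝ (Fin d)) ×
        (Fin (N + 1) → EuclideanSpace ℝ (Fin d))) =>
        p.1 i.succ - p.1 i.castSucc - p.2 i.castSucc := by fun_prop
    have h2 : Continuous fun p : ((Fin (N + 1) → EuclideanSpace ℝ (Fin d)) ×
        (Fin (N + 1) → EuclideanSpace ℝ (Fin d))) =>
        p.2 i.succ - p.2 i.castSucc := by fun_prop
    exact ((continuous_const.mul (h1.norm.pow 2)).sub
      (continuous_const.mul (h1.inner h2))).add (continuous_const.mul (h2.norm.pow 2))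
  have hgc : Continuous fun x : Fin (N + 1) → EuclideanSpace ℝ (Fin d) => Ffun x (V x) := by
    unfold Ffun splineCost
    apply continuous_finset_sum
    intro i _
    have h1 : Continuous fun x : Fin (N + 1) → EuclideanSpace ℝ (Fin d) =>
        x i.succ - x i.castSucc - V x i.castSucc :=
      ((continuous_apply i.succ).sub (continuous_apply i.castSucc)).sub
        ((continuous_apply i.castSucc).comp hVcont)
    have h2 : Continuous fun x : Fin (N + 1) → EuclideanSpace ℝ (Fin d) =>
        V x i.succ - V x i.castSucc :=
      ((continuous_apply i.succ).comp hVcont).sub ((continuous_apply i.castSucc).comp hVcont)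
    exact ((continuous_const.mul (h1.norm.pow 2)).sub
      (continuous_const.mul (h1.inner h2))).add (continuous_const.mul (h2.norm.pow 2))
  have hCm : Measurable fun p : ((Fin (N + 1) → EuclideanSpace ℝ (Fin d)) ×
      (Fin (N + 1) → EuclideanSpace ℝ (Fin d))) => ENNReal.ofReal (Ffun p.1 p.2) :=
    ENNReal.measurable_ofReal.comp hCc.measurable
  have hgm : Measurable fun x : Fin (N + 1) → EuclideanSpace ℝ (Fin d) =>
      ENNReal.ofReal (Ffun x (V x)) := ENNReal.measurable_ofReal.comp hgc.measurable
  have hΦm : Measurable fun x : Fin (N + 1) → EuclideanSpace ℝ (Fin d) => (x, V x) :=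
    measurable_id.prodMk hVmeas
  have hP : IsProbabilityMeasure (γ'.map Prod.fst) :=
    Measure.isProbabilityMeasure_map measurable_fst.aemeasurable
  have hM : ∀ i, (γ'.map Prod.fst).map (fun y => y i) = ρ i := by
    intro i
    rw [Measure.map_map (measurable_pi_apply i) measurable_fst]
    exact hγm i
  have step1 : (∫⁻ p, ENNReal.ofReal (∑ i : Fin N,
      splineCost (p.1 i.castSucc) (p.1 i.succ) (p.2 i.castSucc) (p.2 i.succ))
        ∂(π.map (fun x => (x, V x)))) = ∫⁻ y, ENNReal.ofReal (multiCost N y) ∂π :=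
    calc (∫⁻ p, ENNReal.ofReal (∑ i : Fin N,
          splineCost (p.1 i.castSucc) (p.1 i.succ) (p.2 i.castSucc) (p.2 i.succ))
            ∂(π.map (fun x => (x, V x))))
        = ∫⁻ p, ENNReal.ofReal (Ffun p.1 p.2) ∂(π.map (fun x => (x, V x))) := rfl
      _ = ∫⁻ x, ENNReal.ofReal (Ffun (x, V x).1 (x, V x).2) ∂π :=
          MeasureTheory.lintegral_map hCm hΦm
      _ = ∫⁻ y, ENNReal.ofReal (multiCost N y) ∂π :=
          lintegral_congr fun y => (congrArg ENNReal.ofReal (hMC y)).symm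
  have step2 : (∫⁻ y, ENNReal.ofReal (multiCost N y) ∂(γ'.map Prod.fst)) ≤
      ∫⁻ p, ENNReal.ofReal (∑ i : Fin N,
        splineCost (p.1 i.castSucc) (p.1 i.succ) (p.2 i.castSucc) (p.2 i.succ)) ∂γ' := by
    have e1 : (∫⁻ y, ENNReal.ofReal (multiCost N y) ∂(γ'.map Prod.fst)) =
        ∫⁻ p, ENNReal.ofReal (Ffun p.1 (V p.1)) ∂γ' :=
      calc (∫⁻ y, ENNReal.ofReal (multiCost N y) ∂(γ'.map Prod.fst))
          = ∫⁻ y, ENNReal.ofReal (Ffun y (V y)) ∂(γ'.map Prod.fst) :=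
            lintegral_congr fun y => congrArg ENNReal.ofReal (hMC y)
        _ = ∫⁻ p, ENNReal.ofReal (Ffun p.1 (V p.1)) ∂γ' :=
            MeasureTheory.lintegral_map hgm measurable_fst
    rw [e1]
    apply lintegral_mono
    intro p
    exact ENNReal.ofReal_le_ofReal (hVm p.1 p.2)
  rw [step1]
  exact le_trans (hπopt (γ'.map Prod.fst) hP hM) step2
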